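/- Let κ be a regular cardinal and T a tree of size κ with no κ-branch and no antichain of size κ (a κ-Suslin tree). Then the comparability graph of T is a graph of size κ with no independent set of size κ and no K_κ minor. Conversely, the existence of a graph of size κ with no independent set of size κ and no K_κ minor implies the existence of a κ-Suslin tree. -/

import Mathlib

universe u

open Cardinal

def Colorable' {V : Type u} (G : SimpleGraph V) (μ : Cardinal.{u}) : Prop :=
  ∃ (β : Type u) (c : V → β), #β ≤ μ ∧ ∀ ⦃x y : V⦄, G.Adj x y → c x ≠ c y

def ChromaticEq {V : Type u} (G : SimpleGraph V) (μ : Cardinal.{u}) : Prop :=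
  Colorable' G μ ∧ ∀ ν : Cardinal.{u}, ν < μ → ¬ Colorable' G ν

def HasCompleteMinor {V : Type u} (G : SimpleGraph V) (κ : Cardinal.{u}) : Prop :=
  ∃ (ι : Type u) (U : ι → Set V), #ι = κ ∧
    (∀ i, (U i).Nonempty) ∧
    (∀ i j, i ≠ j → Disjoint (U i) (U j)) ∧
    (∀ i, (G.induce (U i)).Connected) ∧
    (∀ i j, i ≠ j → ∃ x ∈ U i, ∃ y ∈ U j, G.Adj x y)

def IsSetTree (T : Type u) [PartialOrder T] : Prop :=
  ∀ t : T, IsWellOrder {s : T // s < t} (· < ·)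

def compGraph (T : Type u) [PartialOrder T] : SimpleGraph T :=
  SimpleGraph.fromRel (· ≤ ·)

def IsSpecialTree (T : Type u) [PartialOrder T] (κ : Cardinal.{u}) : Prop :=
  ∃ (β : Type u) (f : T → β), #β ≤ κ ∧ ∀ ⦃s t : T⦄, s < t → f s ≠ f t

def HasChainOfSize (T : Type u) [PartialOrder T] (κ : Cardinal.{u}) : Prop :=
  ∃ C : Set T, IsChain (· ≤ ·) C ∧ #C = κ

def HasAntichainOfSize (T : Type u) [PartialOrder T] (κ : Cardinal.{u}) : Prop :=
  ∃ A : Set T, IsAntichain (· ≤ ·) A ∧ #A = κ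

def HasIndepOfSize {V : Type u} (G : SimpleGraph V) (κ : Cardinal.{u}) : Prop :=
  ∃ S : Set V, #S = κ ∧ ∀ x ∈ S, ∀ y ∈ S, ¬ G.Adj x y

def AllChainsCountable (T : Type u) [PartialOrder T] : Prop :=
  ∀ C : Set T, IsChain (· ≤ ·) C → #C ≤ ℵ₀

noncomputable def nodeHeight {T : Type u} [PartialOrder T] (hT : IsSetTree T) (t : T) : Ordinal.{u} :=
  @Ordinal.type {s : T // s < t} (· < ·) (hT t)

def KappaLambdaConnected {V : Type u} (G : SimpleGraph V) (κ μ : Cardinal.{u}) : Prop :=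
  ∀ S : Set V, #S < κ → (Sᶜ : Set V).Nonempty ∧ #((G.induce (Sᶜ : Set V)).ConnectedComponent) < μ

def KappaConnected {V : Type u} (G : SimpleGraph V) (κ : Cardinal.{u}) : Prop :=
  κ ≤ #V ∧ ∀ S : Set V, #S < κ → (G.induce (Sᶜ : Set V)).Connected

def ContainsSubdivisionOfComplete {V : Type u} (G : SimpleGraph V) (κ : Cardinal.{u}) : Prop :=
  ∃ (ι : Type u) (v : ι → V), #ι = κ ∧ Function.Injective v ∧
    ∃ p : ∀ i j : ι, G.Walk (v i) (v j),
      (∀ i j, i ≠ j → (p i j).IsPath) ∧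
      (∀ i j k l, i ≠ j → k ≠ l → (i, j) ≠ (k, l) → (i, j) ≠ (l, k) →
        ∀ x, x ∈ (p i j).support → x ∈ (p k l).support → x ∈ Set.range v) ∧
      (∀ i j k, i ≠ j → v k ∈ (p i j).support → k = i ∨ k = j)

def IsTGraph {T : Type u} [PartialOrder T] (G : SimpleGraph T) : Prop :=
  (∀ ⦃s t⦄, G.Adj s t → s < t ∨ t < s) ∧
  (∀ t s : T, s < t → ∃ r, s ≤ r ∧ r < t ∧ G.Adj r t)

section Fwd
variable {T : Type u} [PartialOrder T]

lemma chain_below (hT : IsSetTree T) {t a b : T} (ha : a ≤ t) (hb : b ≤ t) :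
    a ≤ b ∨ b ≤ a := by
  rcases eq_or_lt_of_le ha with rfl | ha'
  · exact Or.inr hb
  rcases eq_or_lt_of_le hb with rfl | hb'
  · exact Or.inl ha'.le
  rcases (haveI := hT t; trichotomous_of (· < ·) (⟨a, ha'⟩ : {s : T // s < t}) ⟨b, hb'⟩) with h | h | h
  · exact Or.inl (le_of_lt h)
  · exact Or.inl (le_of_eq (congrArg Subtype.val h))
  · exact Or.inr (le_of_lt h)

lemma tree_exists_min (hT : IsSetTree T) {S : Set T} (hS : S.Nonempty) :
    ∃ m ∈ S, ∀ x ∈ S, ¬ x < m := by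
  obtain ⟨u, hu⟩ := hS
  by_cases h : ∃ x ∈ S, x < u
  · obtain ⟨x, hxS, hxu⟩ := h
    have wf := (hT u).wf
    obtain ⟨m, hm, hmin⟩ := wf.has_min {s : {s : T // s < u} | s.val ∈ S} ⟨⟨x, hxu⟩, hxS⟩
    refine ⟨m.val, hm, fun y hy hlt => ?_⟩
    exact hmin ⟨y, lt_trans hlt m.prop⟩ hy hlt
  · push_neg at h
    exact ⟨u, hu, fun x hx hlt => (h x hx) hlt⟩

lemma walk_lb (hT : IsSetTree T) {U : Set T} :
    ∀ {a b : ↑U}, ((compGraph T).induce U).Walk a b →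
      ∃ w ∈ U, w ≤ (a : T) ∧ w ≤ (b : T) := by
  intro a b p
  induction p with
  | @nil u => exact ⟨u, u.prop, le_refl _, le_refl _⟩
  | @cons x y z h p ih =>
    obtain ⟨w, hwU, hwy, hwz⟩ := ih
    have hadj : (compGraph T).Adj x y := h
    rw [compGraph, SimpleGraph.fromRel_adj] at hadj
    rcases hadj.2 with hxy | hyx
    · -- x ≤ y, w ≤ y : w and x comparable below y
      rcases chain_below hT hwy hxy with h1 | h2
      · exact ⟨w, hwU, h1, hwz⟩
      · exact ⟨x, x.prop, le_refl _, le_trans h2 hwz⟩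
    · exact ⟨w, hwU, le_trans hwy hyx, hwz⟩

lemma tree_exists_bot (hT : IsSetTree T) {U : Set T} (hne : U.Nonempty)
    (hconn : ((compGraph T).induce U).Connected) :
    ∃ m ∈ U, ∀ x ∈ U, m ≤ x := by
  obtain ⟨m, hmU, hmin⟩ := tree_exists_min hT hne
  refine ⟨m, hmU, fun x hx => ?_⟩
  obtain ⟨p⟩ := hconn.preconnected ⟨m, hmU⟩ ⟨x, hx⟩
  obtain ⟨w, hwU, hwm, hwx⟩ := walk_lb hT p
  rcases eq_or_lt_of_le hwm with rfl | hlt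
  · exact hwx
  · exact absurd hlt (hmin w hwU)

end Fwd

section Fwd2
variable {T : Type u} [PartialOrder T]

theorem fwd_indep {κ : Cardinal.{u}} (ha : ¬ HasAntichainOfSize T κ) :
    ¬ HasIndepOfSize (compGraph T) κ := by
  rintro ⟨S, hS, hind⟩
  refine ha ⟨S, fun x hx y hy hxy hle => ?_, hS⟩
  exact hind x hx y hy (by rw [compGraph, SimpleGraph.fromRel_adj]; exact ⟨hxy, Or.inl hle⟩)

theorem fwd_minor (hT : IsSetTree T) {κ : Cardinal.{u}} (hch : ¬ HasChainOfSize T κ) :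
    ¬ HasCompleteMinor (compGraph T) κ := by
  rintro ⟨ι, U, hι, hne, hdisj, hconn, hadj⟩
  choose m hmU hmle using fun i => tree_exists_bot hT (hne i) (hconn i)
  have minj : Function.Injective m := by
    intro i j hij
    by_contra hne'
    exact Set.disjoint_left.mp (hdisj i j hne') (hmU i) (hij ▸ hmU j)
  refine hch ⟨Set.range m, ?_, ?_⟩
  · rintro x ⟨i, rfl⟩ y ⟨j, rfl⟩ hxy
    have hij : i ≠ j := fun h => hxy (h ▸ rfl)
    obtain ⟨a, haU, b, hbU, hab⟩ := hadj i j hij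
    rw [compGraph, SimpleGraph.fromRel_adj] at hab
    rcases hab.2 with h1 | h2
    · exact chain_below hT (le_trans (hmle i a haU) h1) (hmle j b hbU)
    · exact chain_below hT (hmle i a haU) (le_trans (hmle j b hbU) h2)
  · rw [Cardinal.mk_range_eq _ minj, hι]

end Fwd2

section RW
variable {V : Type u} (G : SimpleGraph V)

/-- reachability within a vertex set `S` -/
def RW (S : Set V) (a b : V) : Prop :=
  ∃ p : G.Walk a b, ∀ x ∈ p.support, x ∈ S

variable {G}

lemma RW.refl {S : Set V} {a : V} (ha : a ∈ S) : RW G S a a :=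
  ⟨SimpleGraph.Walk.nil, by simp [ha]⟩

lemma RW.symm {S : Set V} {a b : V} (h : RW G S a b) : RW G S b a := by
  obtain ⟨p, hp⟩ := h
  exact ⟨p.reverse, by simpa using hp⟩

lemma RW.trans {S : Set V} {a b c : V} (h1 : RW G S a b) (h2 : RW G S b c) : RW G S a c := by
  obtain ⟨p, hp⟩ := h1
  obtain ⟨q, hq⟩ := h2
  refine ⟨p.append q, fun x hx => ?_⟩
  rw [SimpleGraph.Walk.mem_support_append_iff] at hx
  exact hx.elim (hp x) (hq x)

lemma RW.mono {S S' : Set V} (hSS : S ⊆ S') {a b : V} (h : RW G S a b) : RW G S' a b := by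
  obtain ⟨p, hp⟩ := h
  exact ⟨p, fun x hx => hSS (hp x hx)⟩

lemma RW.left_mem {S : Set V} {a b : V} (h : RW G S a b) : a ∈ S :=
  h.choose_spec a h.choose.start_mem_support

lemma RW.right_mem {S : Set V} {a b : V} (h : RW G S a b) : b ∈ S :=
  h.choose_spec b h.choose.end_mem_support

lemma RW.adj {S : Set V} {a b c : V} (h : RW G S a b) (hadj : G.Adj b c) (hc : c ∈ S) :
    RW G S a c := by
  obtain ⟨p, hp⟩ := h
  refine ⟨p.concat hadj, fun x hx => ?_⟩
  rw [SimpleGraph.Walk.support_concat, List.mem_append] at hx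
  rcases hx with hx | hx
  · exact hp x hx
  · simp at hx; exact hx ▸ hc

end RW

section CompS
variable {V : Type u} (G : SimpleGraph V)

/-- the connected component of `v` within `S` -/
def CompS (S : Set V) (v : V) : Set V := {w | RW G S v w}

variable {G}

lemma mem_compS_self {S : Set V} {v : V} (hv : v ∈ S) : v ∈ CompS G S v := RW.refl hv

lemma compS_subset {S : Set V} {v : V} : CompS G S v ⊆ S := fun _ h => h.right_mem

lemma compS_eq_of_mem {S : Set V} {v w : V} (h : w ∈ CompS G S v) :
    CompS G S w = CompS G S v := by
  ext x
  exact ⟨fun hx => RW.trans h hx, fun hx => RW.trans (RW.symm h) hx⟩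

lemma compS_closed {S : Set V} {v w u : V} (hw : w ∈ CompS G S v) (hadj : G.Adj w u)
    (hu : u ∈ S) : u ∈ CompS G S v := RW.adj hw hadj hu

/-- a component at a finer stage meeting a component is contained in it -/
lemma compS_absorb {S S' : Set V} (hS : S' ⊆ S) {v v' z : V}
    (hz : z ∈ CompS G S v) (hz' : z ∈ CompS G S' v') :
    CompS G S' v' ⊆ CompS G S v := by
  intro w hw
  exact hz.trans ((RW.mono hS hz').symm.trans (RW.mono hS hw))

lemma reach_induce {B : Set V} :
    ∀ {a b : V} (p : G.Walk a b) (hp : ∀ x ∈ p.support, x ∈ B),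
      (G.induce B).Reachable ⟨a, hp _ p.start_mem_support⟩ ⟨b, hp _ p.end_mem_support⟩ := by
  intro a b p
  induction p with
  | nil => intro hp; rfl
  | @cons x y z h p ih =>
    intro hp
    have hy : ∀ u ∈ p.support, u ∈ B := fun u hu => hp u (by simp [hu])
    have hadj : (G.induce B).Adj ⟨x, hp _ (SimpleGraph.Walk.start_mem_support _)⟩
        ⟨y, hy _ p.start_mem_support⟩ := by
      simp [h]
    exact hadj.reachable.trans (ih hy)

lemma induce_connected_of_RW {B : Set V} (hne : B.Nonempty)
    (h : ∀ a ∈ B, ∀ b ∈ B, RW G B a b) : (G.induce B).Connected := by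
  have : Nonempty B := hne.to_subtype
  refine ⟨fun x y => ?_⟩
  obtain ⟨p, hp⟩ := h x.val x.prop y.val y.prop
  exact reach_induce p hp

end CompS

section Rec

/-- general construction of a family by transfinite recursion with choice -/
theorem exists_good_family {α : Type*} [Nonempty α] {O : Type*} [LinearOrder O]
    (hwf : WellFounded ((· < ·) : O → O → Prop))
    (Good : O → (O → α) → α → Prop)
    (hmono : ∀ ξ (E E' : O → α) b, (∀ ζ, ζ < ξ → E ζ = E' ζ) → Good ξ E b → Good ξ E' b)
    (hstep : ∀ ξ (E : O → α), (∀ ζ, ζ < ξ → Good ζ E (E ζ)) → ∃ b, Good ξ E b) :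
    ∃ F : O → α, ∀ ξ, Good ξ F (F ξ) := by
  classical
  set d : α := Classical.arbitrary α with hd
  set F : O → α := hwf.fix (fun ξ IH =>
    if h : ∃ b, Good ξ (fun ζ => if hζ : ζ < ξ then IH ζ hζ else d) b then h.choose else d)
    with hF
  have hFeq : ∀ ξ, F ξ =
      (if h : ∃ b, Good ξ (fun ζ => if hζ : ζ < ξ then F ζ else d) b then h.choose else d) := by
    intro ξ
    rw [hF]
    rw [hwf.fix_eq]
  refine ⟨F, fun ξ => ?_⟩
  induction ξ using hwf.induction with
  | _ ξ IH =>
    set R : O → α := fun ζ => if hζ : ζ < ξ then F ζ else d with hR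
    have hRa : ∀ ζ, ζ < ξ → R ζ = F ζ := fun ζ hζ => dif_pos hζ
    have hGR : ∀ ζ, ζ < ξ → Good ζ R (R ζ) := by
      intro ζ hζ
      rw [hRa ζ hζ]
      refine hmono ζ F R (F ζ) (fun η hη => (hRa η (lt_trans hη hζ)).symm) (IH ζ hζ)
    obtain ⟨b, hb⟩ := hstep ξ R hGR
    have hex : ∃ b, Good ξ R b := ⟨b, hb⟩
    have : F ξ = hex.choose := by rw [hFeq ξ]; simp only [hR]; rw [dif_pos hex]
    rw [this]
    exact hmono ξ R F _ (fun ζ hζ => hRa ζ hζ) hex.choose_spec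

end Rec

section OT
open Ordinal

variable {κ : Cardinal.{u}} (hreg : κ.IsRegular)

lemma mk_ordtoType : #(κ.ord.ToType) = κ := Cardinal.mk_ord_toType κ

lemma OT_nonempty (hreg : κ.IsRegular) : Nonempty κ.ord.ToType := by
  rw [Ordinal.toType_nonempty_iff_ne_zero]
  simp [Cardinal.ord_eq_zero, hreg.pos.ne']

lemma OT_Iio_small (x : κ.ord.ToType) : #(Set.Iio x) < κ := Cardinal.mk_Iio_ord_toType x

/-- strict upper bounds for small subsets -/
lemma OT_bdd (hreg : κ.IsRegular) (S : Set (κ.ord.ToType)) (hS : #S < κ) :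
    ∃ b, ∀ x ∈ S, x < b := by
  by_contra h
  push_neg at h
  have hub : Set.Unbounded (· < ·) S := by
    intro b
    obtain ⟨x, hx, hbx⟩ := h b
    exact ⟨x, hx, not_lt.mpr hbx⟩
  have hcof : IsCofinal S := fun b => h b
  have := Order.cof_le hcof
  rw [Ordinal.cof_toType, hreg.cof_ord] at this
  exact absurd (this.trans_lt hS) (lt_irrefl _)

end OT

section Nodes
variable {V : Type u} (G : SimpleGraph V) (κ : Cardinal.{u}) (e : κ.ord.ToType ≃ V)

def Seg (x : κ.ord.ToType) : Set V := e '' Set.Iio x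

def Nodes : Type u :=
  {p : κ.ord.ToType × Set V // ∃ v ∉ Seg κ e p.1, p.2 = CompS G (Seg κ e p.1)ᶜ v}

instance nodesOrder : PartialOrder (Nodes G κ e) where
  le s t := s.val.1 ≤ t.val.1 ∧ t.val.2 ⊆ s.val.2
  le_refl s := ⟨le_refl _, subset_rfl⟩
  le_trans s t u h1 h2 := ⟨le_trans h1.1 h2.1, h2.2.trans h1.2⟩
  le_antisymm s t h1 h2 := by
    apply Subtype.ext
    exact Prod.ext (le_antisymm h1.1 h2.1) (subset_antisymm h2.2 h1.2)

variable {G κ e}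

lemma seg_mono {x y : κ.ord.ToType} (h : x ≤ y) : Seg κ e x ⊆ Seg κ e y :=
  Set.image_mono (fun _ hz => lt_of_lt_of_le hz h)

lemma mem_seg {x : κ.ord.ToType} {v : V} : v ∈ Seg κ e x ↔ e.symm v < x := by
  constructor
  · rintro ⟨y, hy, rfl⟩; simpa using hy
  · intro h; exact ⟨e.symm v, h, by simp⟩

noncomputable def bp (t : Nodes G κ e) : V := t.prop.choose

lemma bp_spec (t : Nodes G κ e) :
    bp t ∉ Seg κ e t.val.1 ∧ t.val.2 = CompS G (Seg κ e t.val.1)ᶜ (bp t) :=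
  t.prop.choose_spec

lemma bp_mem (t : Nodes G κ e) : bp t ∈ t.val.2 := by
  rw [(bp_spec t).2]
  exact mem_compS_self (bp_spec t).1

lemma node_subset (t : Nodes G κ e) : t.val.2 ⊆ (Seg κ e t.val.1)ᶜ := by
  rw [(bp_spec t).2]; exact compS_subset

lemma node_nonempty (t : Nodes G κ e) : t.val.2.Nonempty := ⟨bp t, bp_mem t⟩

lemma nodes_le_def {s t : Nodes G κ e} :
    s ≤ t ↔ s.val.1 ≤ t.val.1 ∧ t.val.2 ⊆ s.val.2 := Iff.rfl

lemma nodes_absorb {s t : Nodes G κ e} (hst : s.val.1 ≤ t.val.1)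
    (hmeet : (s.val.2 ∩ t.val.2).Nonempty) : s ≤ t := by
  obtain ⟨z, hzs, hzt⟩ := hmeet
  refine ⟨hst, ?_⟩
  have hs := (bp_spec s).2
  have ht := (bp_spec t).2
  have hsub : (Seg κ e t.val.1)ᶜ ⊆ (Seg κ e s.val.1)ᶜ :=
    Set.compl_subset_compl.mpr (seg_mono hst)
  rw [hs, ht]
  rw [hs] at hzs; rw [ht] at hzt
  exact compS_absorb hsub hzs hzt

lemma nodes_eq_of_stage {s t : Nodes G κ e} (h : s ≤ t) (hst : s.val.1 = t.val.1) : s = t := by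
  obtain ⟨z, hz⟩ := node_nonempty t
  have h2 : t ≤ s := nodes_absorb (le_of_eq hst.symm) ⟨z, hz, h.2 hz⟩
  exact le_antisymm h h2

lemma nodes_lt_iff {s t : Nodes G κ e} :
    s < t ↔ s.val.1 < t.val.1 ∧ t.val.2 ⊆ s.val.2 := by
  constructor
  · intro h
    rcases lt_iff_le_and_ne.mp h with ⟨hle, hne⟩
    refine ⟨lt_of_le_of_ne hle.1 (fun hh => hne (nodes_eq_of_stage hle hh)), hle.2⟩
  · rintro ⟨h1, h2⟩
    refine lt_iff_le_and_ne.mpr ⟨⟨le_of_lt h1, h2⟩, fun hh => ?_⟩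
    rw [hh] at h1; exact lt_irrefl _ h1

lemma nodes_isSetTree : ∀ t : Nodes G κ e, IsWellOrder {s : Nodes G κ e // s < t} (· < ·) := by
  intro t
  have htri : IsTrichotomous {s : Nodes G κ e // s < t} (· < ·) := by
    constructor
    intro a b
    refine (fun h : a < b ∨ a = b ∨ b < a => fun h1 h2 =>
      h.elim (absurd · h1) (·.elim id (absurd · h2))) ?_
    have hmeet : ∀ (u w : Nodes G κ e), u < t → w < t → u.val.1 ≤ w.val.1 → u ≤ w := by
      intro u w hu hw huw
      obtain ⟨z, hz⟩ := node_nonempty t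
      exact nodes_absorb huw ⟨z, (nodes_lt_iff.mp hu).2 hz, (nodes_lt_iff.mp hw).2 hz⟩
    rcases le_total a.val.val.1 b.val.val.1 with h | h
    · have := hmeet a.val b.val a.prop b.prop h
      rcases lt_or_eq_of_le this with h' | h'
      · exact Or.inl h'
      · exact Or.inr (Or.inl (Subtype.ext h'))
    · have := hmeet b.val a.val b.prop a.prop h
      rcases lt_or_eq_of_le this with h' | h'
      · exact Or.inr (Or.inr h')
      · exact Or.inr (Or.inl (Subtype.ext h'.symm))
  have htrans : IsTrans {s : Nodes G κ e // s < t} (· < ·) := by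
    constructor
    intro a b c hab hbc
    exact lt_trans (α := Nodes G κ e) hab hbc
  have hwf' : IsWellFounded {s : Nodes G κ e // s < t} (· < ·) := by
    constructor
    have hwf : WellFounded ((· < ·) : κ.ord.ToType → κ.ord.ToType → Prop) :=
      wellFounded_lt
    refine Subrelation.wf (r := InvImage (· < ·)
      (fun s : {s : Nodes G κ e // s < t} => s.val.val.1)) ?_ (InvImage.wf _ hwf)
    intro a b hab
    exact (nodes_lt_iff.mp hab).1
  exact { toTrichotomous := htri, toIsWellFounded := hwf' }

end Nodes

section NodesCard
variable {V : Type u} {G : SimpleGraph V} {κ : Cardinal.{u}} {e : κ.ord.ToType ≃ V}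

lemma nodes_card (hreg : κ.IsRegular) (hV : #V = κ) : #(Nodes G κ e) = κ := by
  apply le_antisymm
  · have hf : Function.Injective (fun t : Nodes G κ e => (t.val.1, bp t)) := by
      intro s t h
      rw [Prod.mk.injEq] at h
      apply Subtype.ext
      refine Prod.ext h.1 ?_
      rw [(bp_spec s).2, (bp_spec t).2, h.1, h.2]
    calc #(Nodes G κ e) ≤ #(κ.ord.ToType × V) := Cardinal.mk_le_of_injective hf
      _ = κ * κ := by rw [Cardinal.mk_prod, Cardinal.mk_ord_toType, hV]; simp
      _ = κ := Cardinal.mul_eq_self hreg.aleph0_le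
  · have hg : Function.Injective (fun x : κ.ord.ToType =>
        (⟨(x, CompS G (Seg κ e x)ᶜ (e x)), ⟨e x, fun hx => by
          rw [mem_seg] at hx; simp at hx, rfl⟩⟩ : Nodes G κ e)) := by
      intro x y h
      exact congrArg (fun t : Nodes G κ e => t.val.1) h
    calc κ = #(κ.ord.ToType) := (Cardinal.mk_ord_toType κ).symm
      _ ≤ #(Nodes G κ e) := Cardinal.mk_le_of_injective hg

lemma nodes_pair_key {A : Set (Nodes G κ e)} (hA : IsAntichain (· ≤ ·) A)
    {s t : Nodes G κ e} (hs : s ∈ A) (ht : t ∈ A) (hne : s ≠ t)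
    (hst : s.val.1 ≤ t.val.1) :
    ∀ a ∈ s.val.2, ∀ b ∈ t.val.2, a ≠ b ∧ ¬ G.Adj a b := by
  have hnst : ¬ s ≤ t := hA hs ht hne
  intro a ha b hb
  constructor
  · rintro rfl
    exact hnst (nodes_absorb hst ⟨a, ha, hb⟩)
  · intro hadj
    have hbS : b ∈ (Seg κ e s.val.1)ᶜ :=
      (Set.compl_subset_compl.mpr (seg_mono hst)) (node_subset t hb)
    have ha' : a ∈ CompS G (Seg κ e s.val.1)ᶜ (bp s) := by rw [← (bp_spec s).2]; exact ha
    have hb' : b ∈ s.val.2 := by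
      rw [(bp_spec s).2]; exact compS_closed ha' hadj hbS
    exact hnst (nodes_absorb hst ⟨b, hb', hb⟩)

lemma nodes_no_antichain (hI : ¬ ∃ S : Set V, #S = κ ∧ ∀ x ∈ S, ∀ y ∈ S, ¬ G.Adj x y) :
    ¬ ∃ A : Set (Nodes G κ e), IsAntichain (· ≤ ·) A ∧ #A = κ := by
  rintro ⟨A, hA, hAc⟩
  have key : ∀ s ∈ A, ∀ t ∈ A, s ≠ t → bp s ≠ bp t ∧ ¬ G.Adj (bp s) (bp t) := by
    intro s hs t ht hne
    rcases le_total s.val.1 t.val.1 with h | h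
    · exact nodes_pair_key hA hs ht hne h _ (bp_mem s) _ (bp_mem t)
    · have := nodes_pair_key hA ht hs hne.symm h _ (bp_mem t) _ (bp_mem s)
      exact ⟨fun h => this.1 h.symm, fun hadj => this.2 hadj.symm⟩
  refine hI ⟨bp '' A, ?_, ?_⟩
  · rw [Cardinal.mk_image_eq_of_injOn]
    · exact hAc
    · intro s hs t ht h
      by_contra hne
      exact (key s hs t ht hne).1 h
  · rintro x ⟨s, hs, rfl⟩ y ⟨t, ht, rfl⟩
    by_cases hst : s = t
    · subst hst; exact fun h => G.irrefl h
    · exact (key s hs t ht hst).2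

end NodesCard

lemma compS_walk {V : Type u} {G : SimpleGraph V} {S : Set V} {v a b : V}
    (ha : a ∈ CompS G S v) (hb : b ∈ CompS G S v) : RW G (CompS G S v) a b := by
  classical
  obtain ⟨p, hp⟩ := (RW.symm ha).trans hb
  refine ⟨p, fun x hx => ?_⟩
  exact ha.trans ⟨p.takeUntil x hx, fun y hy => hp y (p.support_takeUntil_subset hx hy)⟩

section ChainCase
variable {V : Type u} {G : SimpleGraph V} {κ : Cardinal.{u}} {e : κ.ord.ToType ≃ V}

def Kf (sfun : κ.ord.ToType → Nodes G κ e) (γ : κ.ord.ToType) : Set V := (sfun γ).val.2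

def CofP (sfun : κ.ord.ToType → Nodes G κ e) (w : V) : Prop :=
  ∀ γ, ∃ δ, γ ≤ δ ∧ ∃ u ∈ Kf sfun δ, G.Adj w u

variable {Ch : Set (Nodes G κ e)} {sfun : κ.ord.ToType → Nodes G κ e}

lemma chain_stage_inj (hCh : IsChain (· ≤ ·) Ch) :
    ∀ s ∈ Ch, ∀ t ∈ Ch, s.val.1 = t.val.1 → s = t := by
  intro s hs t ht h
  by_contra hne
  rcases hCh hs ht hne with hle | hle
  · exact hne (nodes_eq_of_stage hle h)
  · exact hne ((nodes_eq_of_stage hle h.symm).symm)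

lemma Kf_nonempty (γ : κ.ord.ToType) : (Kf sfun γ).Nonempty := node_nonempty _

lemma Kf_mono (hCh : IsChain (· ≤ ·) Ch) (hsCh : ∀ γ, sfun γ ∈ Ch)
    (hsge : ∀ γ, γ ≤ (sfun γ).val.1) {γ δ : κ.ord.ToType}
    (h : (sfun γ).val.1 ≤ δ) : Kf sfun δ ⊆ Kf sfun γ := by
  by_cases heq : sfun γ = sfun δ
  · show (sfun δ).val.2 ⊆ (sfun γ).val.2
    rw [heq]
  · rcases hCh (hsCh γ) (hsCh δ) heq with hle | hle
    · exact hle.2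
    · have h2 : (sfun γ).val.1 ≤ (sfun δ).val.1 := le_trans h (hsge δ)
      have := chain_stage_inj hCh _ (hsCh δ) _ (hsCh γ) (le_antisymm hle.1 h2)
      show (sfun δ).val.2 ⊆ (sfun γ).val.2
      rw [this]

lemma Kf_seg (hsge : ∀ γ, γ ≤ (sfun γ).val.1) {γ : κ.ord.ToType} {w : V}
    (hw : w ∈ Kf sfun γ) : ¬ e.symm w < γ := by
  intro hlt
  exact (node_subset _ hw) (seg_mono (hsge γ) (mem_seg.mpr hlt))

lemma Kf_avoid (hreg : κ.IsRegular) (hsge : ∀ γ, γ ≤ (sfun γ).val.1)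
    (W : Set V) (hW : #W < κ) :
    ∃ γ₀, ∀ δ, γ₀ ≤ δ → ∀ w ∈ W, w ∉ Kf sfun δ := by
  obtain ⟨b, hb⟩ := OT_bdd hreg (e.symm '' W) (lt_of_le_of_lt Cardinal.mk_image_le hW)
  refine ⟨b, fun δ hδ w hw hwK => ?_⟩
  exact Kf_seg hsge hwK (lt_of_lt_of_le (hb _ ⟨w, hw, rfl⟩) hδ)

lemma Kf_walk {γ : κ.ord.ToType} {a b : V} (ha : a ∈ Kf sfun γ) (hb : b ∈ Kf sfun γ) :
    ∃ p : G.Walk a b, ∀ x ∈ p.support, x ∈ Kf sfun γ := by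
  have h1 : (sfun γ).val.2 = CompS G (Seg κ e (sfun γ).val.1)ᶜ (bp (sfun γ)) :=
    (bp_spec (sfun γ)).2
  have ha' : a ∈ CompS G (Seg κ e (sfun γ).val.1)ᶜ (bp (sfun γ)) := h1 ▸ ha
  have hb' : b ∈ CompS G (Seg κ e (sfun γ).val.1)ᶜ (bp (sfun γ)) := h1 ▸ hb
  obtain ⟨p, hp⟩ := compS_walk (G := G) ha' hb'
  refine ⟨p, fun x hx => ?_⟩
  have : x ∈ CompS G (Seg κ e (sfun γ).val.1)ᶜ (bp (sfun γ)) := hp x hx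
  rw [← h1] at this
  exact this

/-- every deep component contains a vertex with cofinal neighbourhood -/
lemma claimC (hreg : κ.IsRegular) (hV : #V = κ)
    (hI : ¬ ∃ S : Set V, #S = κ ∧ ∀ x ∈ S, ∀ y ∈ S, ¬ G.Adj x y)
    (hCh : IsChain (· ≤ ·) Ch) (hsCh : ∀ γ, sfun γ ∈ Ch)
    (hsge : ∀ γ, γ ≤ (sfun γ).val.1) (γh : κ.ord.ToType) :
    ∃ w ∈ Kf sfun γh, CofP sfun w := by
  by_contra hnc
  push_neg at hnc
  haveI : Nonempty (κ.ord.ToType) := OT_nonempty hreg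
  have hγbar : ∀ w : V, ∃ γw, ¬ CofP sfun w → ∀ δ, γw ≤ δ → ∀ u ∈ Kf sfun δ, ¬ G.Adj w u := by
    intro w
    by_cases h : CofP sfun w
    · exact ⟨Classical.arbitrary _, fun hn => absurd h hn⟩
    · have h' := h
      rw [CofP] at h'
      push_neg at h'
      obtain ⟨γ, hγ⟩ := h'
      exact ⟨γ, fun _ δ hδ u hu hadj => hγ δ hδ u hu hadj⟩
  choose γbar hγb using hγbar
  haveI : Nonempty V := by
    rw [← Cardinal.mk_ne_zero_iff, hV]; exact hreg.pos.ne'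
  have hwf : WellFounded ((· < ·) : κ.ord.ToType → κ.ord.ToType → Prop) :=
    wellFounded_lt
  obtain ⟨F, hF⟩ := exists_good_family (α := V) hwf
    (fun ξ E b => ∃ δ, (sfun γh).val.1 ≤ δ ∧ b ∈ Kf sfun δ ∧
      ∀ ζ, ζ < ξ → (γbar (E ζ) ≤ δ ∧ b ≠ E ζ))
    (by
      rintro ξ E E' b hag ⟨δ, h1, h2, h3⟩
      refine ⟨δ, h1, h2, fun ζ hζ => ?_⟩
      rw [← hag ζ hζ]
      exact h3 ζ hζ)
    (by
      intro ξ E _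
      obtain ⟨γ₀, hγ₀⟩ := Kf_avoid hreg hsge (E '' Set.Iio ξ)
        (lt_of_le_of_lt Cardinal.mk_image_le (OT_Iio_small ξ))
      obtain ⟨b1, hb1⟩ := OT_bdd hreg ((fun ζ => γbar (E ζ)) '' Set.Iio ξ)
        (lt_of_le_of_lt Cardinal.mk_image_le (OT_Iio_small ξ))
      obtain ⟨w, hw⟩ := Kf_nonempty (sfun := sfun) (max (max (sfun γh).val.1 γ₀) b1)
      refine ⟨w, max (max (sfun γh).val.1 γ₀) b1,
        le_trans (le_max_left _ _) (le_max_left _ _), hw, fun ζ hζ => ⟨?_, ?_⟩⟩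
      · exact le_trans (le_of_lt (hb1 _ ⟨ζ, hζ, rfl⟩)) (le_max_right _ _)
      · intro hEq
        exact hγ₀ _ (le_trans (le_max_right _ _) (le_max_left _ _)) (E ζ) ⟨ζ, hζ, rfl⟩
          (hEq ▸ hw))
  have hFK : ∀ ξ, F ξ ∈ Kf sfun γh := by
    intro ξ
    obtain ⟨δ, h1, h2, _⟩ := hF ξ
    exact Kf_mono hCh hsCh hsge h1 h2
  have hind : ∀ ζ ξ, ζ < ξ → (¬ G.Adj (F ζ) (F ξ) ∧ F ξ ≠ F ζ) := by
    intro ζ ξ h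
    obtain ⟨δ, h1, h2, h3⟩ := hF ξ
    obtain ⟨hgb, hne⟩ := h3 ζ h
    exact ⟨hγb (F ζ) (hnc _ (hFK ζ)) δ hgb _ h2, hne⟩
  apply hI
  refine ⟨Set.range F, ?_, ?_⟩
  · rw [Cardinal.mk_range_eq]
    · exact Cardinal.mk_ord_toType κ
    · intro a b hab
      by_contra hne
      rcases lt_or_gt_of_ne hne with h | h
      · exact (hind a b h).2 hab.symm
      · exact (hind b a h).2 hab
  · rintro x ⟨a, rfl⟩ y ⟨b, rfl⟩ hadj
    rcases lt_trichotomy a b with h | rfl | h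
    · exact (hind a b h).1 hadj
    · exact G.irrefl hadj
    · exact (hind b a h).1 hadj.symm

end ChainCase

section NoChain
variable {V : Type u} {G : SimpleGraph V} {κ : Cardinal.{u}} {e : κ.ord.ToType ≃ V}

lemma nodes_no_chain (hreg : κ.IsRegular) (hV : #V = κ)
    (hI : ¬ ∃ S : Set V, #S = κ ∧ ∀ x ∈ S, ∀ y ∈ S, ¬ G.Adj x y)
    (hM : ¬ HasCompleteMinor G κ) :
    ¬ ∃ C : Set (Nodes G κ e), IsChain (· ≤ ·) C ∧ #C = κ := by
  classical
  rintro ⟨Ch, hCh, hChc⟩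
  -- the chain is cofinal in stages
  have hcof : ∀ γ : κ.ord.ToType, ∃ s, s ∈ Ch ∧ γ ≤ s.val.1 := by
    intro γ
    by_contra h
    push_neg at h
    have hinj : Function.Injective (fun s : Ch =>
        (⟨s.val.val.1, h s.val s.prop⟩ : Set.Iio γ)) := by
      intro a b hab
      apply Subtype.ext
      exact chain_stage_inj hCh _ a.prop _ b.prop (congrArg Subtype.val hab)
    have hle := Cardinal.mk_le_of_injective hinj
    rw [hChc] at hle
    exact absurd (hle.trans_lt (OT_Iio_small γ)) (lt_irrefl κ)
  choose sfun hsCh hsge using hcof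
  apply hM
  have hwf : WellFounded ((· < ·) : κ.ord.ToType → κ.ord.ToType → Prop) :=
    wellFounded_lt
  obtain ⟨F, hF⟩ := exists_good_family (α := Set V) hwf
    (fun ξ E B => #B < κ ∧ (G.induce B).Connected ∧ (∃ w ∈ B, CofP sfun w) ∧
      ∀ ζ, ζ < ξ → (Disjoint B (E ζ) ∧ ∃ x ∈ E ζ, ∃ y ∈ B, G.Adj x y))
    (by
      rintro ξ E E' B hag ⟨h1, h2, h3, h4⟩
      refine ⟨h1, h2, h3, fun ζ hζ => ?_⟩
      rw [← hag ζ hζ]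
      exact h4 ζ hζ)
    (by
      intro ξ E hprev
      have hW : #(⋃ ζ : Set.Iio ξ, E ζ.val) < κ := by
        rw [Cardinal.card_iUnion_lt_iff_forall_of_isRegular hreg (OT_Iio_small ξ)]
        exact fun ζ => (hprev ζ.val ζ.prop).1
      obtain ⟨γ₀, hγ₀⟩ := Kf_avoid hreg hsge _ hW
      have hKdisj : ∀ ζ : Set.Iio ξ, ∀ w ∈ E ζ.val, w ∉ Kf sfun γ₀ := by
        intro ζ w hw
        exact hγ₀ γ₀ le_rfl w (Set.mem_iUnion.mpr ⟨ζ, hw⟩)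
      have hwv : ∀ ζ : Set.Iio ξ, ∃ w, w ∈ E ζ.val ∧ CofP sfun w := by
        intro ζ
        obtain ⟨_, _, ⟨w, hw1, hw2⟩, _⟩ := hprev ζ.val ζ.prop
        exact ⟨w, hw1, hw2⟩
      choose wv hwv1 hwv2 using hwv
      have hu : ∀ ζ : Set.Iio ξ, ∃ u, u ∈ Kf sfun γ₀ ∧ G.Adj (wv ζ) u := by
        intro ζ
        obtain ⟨δ, hδ1, u, hu1, hu2⟩ := hwv2 ζ ((sfun γ₀).val.1)
        exact ⟨u, Kf_mono hCh hsCh hsge hδ1 hu1, hu2⟩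
      choose uv huv1 huv2 using hu
      obtain ⟨ws, hws1, hws2⟩ := claimC hreg hV hI hCh hsCh hsge γ₀
      have hwalk : ∀ ζ : Set.Iio ξ, ∃ p : G.Walk ws (uv ζ), ∀ x ∈ p.support, x ∈ Kf sfun γ₀ :=
        fun ζ => Kf_walk hws1 (huv1 ζ)
      choose p hp using hwalk
      refine ⟨{x | x = ws ∨ ∃ ζ : Set.Iio ξ, x ∈ (p ζ).support}, ?_, ?_, ?_, ?_⟩
      · -- cardinality
        have hBeq : {x | x = ws ∨ ∃ ζ : Set.Iio ξ, x ∈ (p ζ).support} =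
            {ws} ∪ ⋃ ζ : Set.Iio ξ, {x | x ∈ (p ζ).support} := by
          ext x
          simp [Set.mem_iUnion]
        rw [hBeq]
        apply lt_of_le_of_lt (Cardinal.mk_union_le _ _)
        apply Cardinal.add_lt_of_lt hreg.aleph0_le
        · exact lt_of_lt_of_le (by simp) hreg.aleph0_le
        · rw [Cardinal.card_iUnion_lt_iff_forall_of_isRegular hreg (OT_Iio_small ξ)]
          intro ζ
          exact lt_of_lt_of_le (List.finite_toSet _).lt_aleph0 hreg.aleph0_le
      · -- connectivity
        have hreach : ∀ x ∈ {x | x = ws ∨ ∃ ζ : Set.Iio ξ, x ∈ (p ζ).support},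
            RW G {x | x = ws ∨ ∃ ζ : Set.Iio ξ, x ∈ (p ζ).support} ws x := by
          rintro x (rfl | ⟨ζ, hx⟩)
          · exact RW.refl (Or.inl rfl)
          · exact ⟨(p ζ).takeUntil x hx, fun y hy =>
              Or.inr ⟨ζ, (p ζ).support_takeUntil_subset hx hy⟩⟩
        refine induce_connected_of_RW ⟨ws, Or.inl rfl⟩ ?_
        intro a ha b hb
        exact (RW.symm (hreach a ha)).trans (hreach b hb)
      · exact ⟨ws, Or.inl rfl, hws2⟩
      · -- disjointness and edges
        intro ζ hζ
        have hBK : {x | x = ws ∨ ∃ ζ : Set.Iio ξ, x ∈ (p ζ).support} ⊆ Kf sfun γ₀ := by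
          rintro x (rfl | ⟨ζ', hx⟩)
          · exact hws1
          · exact hp ζ' x hx
        constructor
        · rw [Set.disjoint_left]
          intro x hxB hxE
          exact hKdisj ⟨ζ, hζ⟩ x hxE (hBK hxB)
        · exact ⟨wv ⟨ζ, hζ⟩, hwv1 ⟨ζ, hζ⟩, uv ⟨ζ, hζ⟩,
            Or.inr ⟨⟨ζ, hζ⟩, (p ⟨ζ, hζ⟩).end_mem_support⟩, huv2 ⟨ζ, hζ⟩⟩)
  refine ⟨κ.ord.ToType, F, Cardinal.mk_ord_toType κ, ?_, ?_, ?_, ?_⟩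
  · intro i
    obtain ⟨_, _, ⟨w, hw, _⟩, _⟩ := hF i
    exact ⟨w, hw⟩
  · intro i j hne
    rcases lt_or_gt_of_ne hne with h | h
    · exact ((hF j).2.2.2 i h).1.symm
    · exact ((hF i).2.2.2 j h).1
  · exact fun i => (hF i).2.1
  · intro i j hne
    rcases lt_or_gt_of_ne hne with h | h
    · exact ((hF j).2.2.2 i h).2
    · obtain ⟨x, hx, y, hy, hadj⟩ := ((hF i).2.2.2 j h).2
      exact ⟨y, hy, x, hx, hadj.symm⟩

end NoChain

/-- for κ regular, the comparability graph of a κ-Suslin tree is a graph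
of size κ with no independent set of size κ and no K_κ minor; conversely the existence
of such a graph implies the existence of a κ-Suslin tree. -/
theorem stmt18 (κ : Cardinal.{u}) (hreg : κ.IsRegular) :
    (∀ (T : Type u) (i : PartialOrder T), @IsSetTree T i → #T = κ →
      ¬ @HasChainOfSize T i κ → ¬ @HasAntichainOfSize T i κ →
      #T = κ ∧ ¬ HasIndepOfSize (@compGraph T i) κ ∧
        ¬ HasCompleteMinor (@compGraph T i) κ) ∧
    ((∃ (V : Type u) (G : SimpleGraph V), #V = κ ∧
        ¬ HasIndepOfSize G κ ∧ ¬ HasCompleteMinor G κ) →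
      ∃ (T : Type u) (i : PartialOrder T), @IsSetTree T i ∧ #T = κ ∧
        ¬ @HasChainOfSize T i κ ∧ ¬ @HasAntichainOfSize T i κ) := by
  constructor
  · intro T i hT hcard hch ha
    exact ⟨hcard, fwd_indep ha, fwd_minor hT hch⟩
  · rintro ⟨V, G, hV, hI, hM⟩
    obtain ⟨e⟩ : Nonempty (κ.ord.ToType ≃ V) := by
      rw [← Cardinal.eq, Cardinal.mk_ord_toType, hV]
    exact ⟨Nodes G κ e, nodesOrder G κ e, nodes_isSetTree, nodes_card hreg hV,
      nodes_no_chain hreg hV hI hM, nodes_no_antichain hI⟩
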